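/- Let A be a commutative Noetherian integral domain with the property that for every prime ideal p of A of height at least 2, the module Ext¹_A(A/p, A) vanishes. Let B be a ring with A ⊆ B ⊆ Frac(A) such that B is finitely generated as an A-module, and suppose that for every prime ideal p of A of height at most 1 the localization map makes A_p = B_p inside Frac(A) (equivalently, the inclusion A → B becomes an isomorphism after localizing at every prime of height at most 1). Then A = B. -/

import Mathlib

set_option synthInstance.maxHeartbeats 1000000
set_option maxHeartbeats 1000000
open CategoryTheory

universe u

/-- The ideal of denominators of an element of an `A`-algebra. -/
def denIdeal (A : Type u) [CommRing A] {K : Type u} [CommRing K] [Algebra A K]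
    (b : K) : Ideal A where
  carrier := {a | ∃ c, algebraMap A K a * b = algebraMap A K c}
  add_mem' := by
    rintro a a' ⟨c, hc⟩ ⟨c', hc'⟩
    exact ⟨c + c', by rw [map_add, map_add, add_mul, hc, hc']⟩
  zero_mem' := ⟨0, by simp⟩
  smul_mem' := by
    rintro r a ⟨c, hc⟩
    exact ⟨r * c, by rw [smul_eq_mul, map_mul, map_mul, mul_assoc, hc]⟩

lemma mem_denIdeal {A : Type u} [CommRing A] {K : Type u} [CommRing K] [Algebra A K]
    {b : K} {a : A} : a ∈ denIdeal A b ↔ ∃ c, algebraMap A K a * b = algebraMap A K c :=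
  Iff.rfl


lemma ext_vanishing_key {A : Type u} [CommRing A] (p : Ideal A)
    (hsub : Subsingleton (((Ext A (ModuleCat A) 1).obj
      (Opposite.op (ModuleCat.of A (A ⧸ p)))).obj (ModuleCat.of A A)))
    (f : p →ₗ[A] A) :
    ∃ s c : A, s - 1 ∈ p ∧ ∀ x : p, s * f x = c * (x : A) := by
  classical
  let M : ModuleCat.{u} A := ModuleCat.of A (A ⧸ p)
  let Y : ModuleCat.{u} A := ModuleCat.of A A
  obtain ⟨P⟩ : Nonempty (ProjectiveResolution M) := HasProjectiveResolution.out
  let π₀ : P.complex.X 0 ⟶ M := P.π.f 0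
  let d10 := P.complex.d 1 0
  let d21 := P.complex.d 2 1
  -- the quotient map as a morphism
  let g : Y ⟶ M := ModuleCat.ofHom (p.mkQ : A →ₗ[A] A ⧸ p)
  haveI : Epi g := (ModuleCat.epi_iff_surjective g).mpr (Submodule.mkQ_surjective p)
  -- a preimage of 1 in degree 0
  obtain ⟨t, ht⟩ : ∃ t : P.complex.X 0, π₀ t = Submodule.Quotient.mk 1 :=
    (ModuleCat.epi_iff_surjective π₀).mp (inferInstanceAs (Epi (P.π.f 0))) _
  -- exactness at degree 0
  have hker : ∀ w : P.complex.X 0, π₀ w = 0 → ∃ u, d10 u = w := by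
    have := (ShortComplex.moduleCat_exact_iff _).mp P.exact₀
    exact this
  -- comparison maps
  haveI : Projective (P.complex.X 0) := P.projective 0
  let α₀ : P.complex.X 0 ⟶ Y := Projective.factorThru π₀ g
  have hα₀ : ∀ w, p.mkQ (α₀ w) = π₀ w := fun w =>
    congrArg (fun h => h.hom w) (Projective.factorThru_comp π₀ g)
  have hd0 : ∀ u, π₀ (d10 u) = 0 := fun u =>
    congrArg (fun h => h.hom u) (P.complex_d_comp_π_f_zero)
  have hmem : ∀ u, α₀.hom.comp d10.hom u ∈ p := by
    intro u
    rw [← Submodule.Quotient.mk_eq_zero p]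
    show p.mkQ (α₀ (d10 u)) = 0
    rw [hα₀, hd0]
  let α₁ : P.complex.X 1 →ₗ[A] p :=
    LinearMap.codRestrict (p : Submodule A A) (α₀.hom.comp d10.hom) hmem
  -- the cocycle
  let y : P.complex.X 1 ⟶ Y := ModuleCat.ofHom (f.comp α₁ : P.complex.X 1 →ₗ[A] A)
  have hcocycle : d21 ≫ y = 0 := by
    apply ModuleCat.hom_ext
    apply LinearMap.ext
    intro v
    show f (α₁ (d21 v)) = 0
    have : α₁ (d21 v) = 0 := by
      apply Subtype.ext
      show α₀ (d10 (d21 v)) = 0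
      have : d10 (d21 v) = 0 := congrArg (fun h => h.hom v) (P.complex.d_comp_d 2 1 0)
      rw [this, map_zero]
    rw [this, map_zero]
  -- homology vanishing
  let CC := P.complex.linearYonedaObj A Y
  have hz : Limits.IsZero (CC.homology 1) := by
    haveI := hsub
    exact Limits.IsZero.of_iso (ModuleCat.isZero_of_subsingleton _) (P.isoExt 1 Y).symm
  have hexact : CC.ExactAt 1 := (HomologicalComplex.exactAt_iff_isZero_homology _ _).mpr hz
  have hex := (ShortComplex.moduleCat_exact_iff _).mp
    ((HomologicalComplex.exactAt_iff' CC 0 1 2 (by simp) (by simp)).mp hexact)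
  obtain ⟨ψ₀, hψ₀⟩ := hex y hcocycle
  let ψ : P.complex.X 0 ⟶ Y := ψ₀
  have hψ' : ∀ u, ψ (d10 u) = f (α₁ u) := fun u => congrArg (fun h : P.complex.X 1 ⟶ Y => h.hom u) hψ₀
  let s : A := α₀ t
  let c : A := ψ t
  refine ⟨s, c, ?_, ?_⟩
  · rw [← Submodule.Quotient.eq p]
    show p.mkQ (α₀ t) = Submodule.Quotient.mk 1
    rw [hα₀]; exact ht
  · intro x
    have hx0 : π₀ ((x : A) • t) = 0 := by
      rw [map_smul, ht]
      show (x : A) • Submodule.Quotient.mk (1 : A) = (0 : A ⧸ p)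
      rw [← Submodule.Quotient.mk_smul, smul_eq_mul, mul_one, Submodule.Quotient.mk_eq_zero]
      exact x.2
    obtain ⟨u, hu⟩ := hker _ hx0
    have e1 : ψ (d10 u) = f (α₁ u) := hψ' u
    have e2 : ψ (d10 u) = (x : A) • c := by rw [hu]; exact map_smul ψ.hom (x : A) t
    have e3 : (α₁ u : A) = (x : A) • s := by
      show α₀ (d10 u) = (x : A) • s
      rw [hu]; exact map_smul α₀.hom (x : A) t
    have e4 : α₁ u = s • x := by
      apply Subtype.ext
      rw [e3]
      show (x : A) • s = s • (x : A)
      rw [smul_eq_mul, smul_eq_mul, mul_comm]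
    have e5 : f (α₁ u) = s * f x := by rw [e4, map_smul, smul_eq_mul]
    have e6 : s * f x = (x : A) * c := by rw [← e5, ← e1, e2, smul_eq_mul]
    rw [e6, mul_comm]

/-- Algebraic form of the lemma that a finite proper birational map onto an S2 variety
which is an isomorphism away from codimension 2 is an isomorphism.
Let `A` be a Noetherian domain such that `Ext¹_A(A/p, A) = 0` for every prime `p` of
height at least 2 (i.e. admitting a chain of primes `q₁ < q₂ < p`).  If `B` is a ring
with `A ⊆ B ⊆ Frac(A)`, finite as an `A`-module, such that `A_p = B_p` inside `Frac(A)`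
for every prime `p` of height at most 1 (i.e. every element of `B` lies in `A_p`),
then `A = B`. -/
theorem s2_birational_iso (A : Type*) [CommRing A] [IsDomain A] [IsNoetherianRing A]
    (hExt : ∀ p : Ideal A, p.IsPrime →
      (∃ q₁ q₂ : Ideal A, q₁.IsPrime ∧ q₂.IsPrime ∧ q₁ < q₂ ∧ q₂ < p) →
      Subsingleton (((Ext A (ModuleCat A) 1).obj
        (Opposite.op (ModuleCat.of A (A ⧸ p)))).obj (ModuleCat.of A A)))
    (B : Subalgebra A (FractionRing A)) (hfin : Module.Finite A B)
    (hloc : ∀ p : Ideal A, p.IsPrime →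
      (¬∃ q₁ q₂ : Ideal A, q₁.IsPrime ∧ q₂.IsPrime ∧ q₁ < q₂ ∧ q₂ < p) →
      ∀ b ∈ B, ∃ a s : A, s ∉ p ∧
        b * algebraMap A (FractionRing A) s = algebraMap A (FractionRing A) a) :
    B = ⊥ := by

  classical
  set K := FractionRing A
  set φ := algebraMap A K with hφ
  have hinj : Function.Injective φ := IsFractionRing.injective A K
  by_contra hne
  -- pick an element of `B` not in `A` whose denominator ideal is maximal
  have hnonempty : {I : Ideal A | ∃ b : K, b ∈ B ∧ (¬∃ a, φ a = b) ∧ I = denIdeal A b}.Nonempty := by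
    have hle : ¬(B ≤ ⊥) := fun h => hne (le_antisymm h bot_le)
    obtain ⟨b, hbB, hb⟩ := SetLike.not_le_iff_exists.mp hle
    refine ⟨denIdeal A b, b, hbB, ?_, rfl⟩
    rintro ⟨a, ha⟩
    exact hb (Algebra.mem_bot.mpr ⟨a, ha⟩)
  obtain ⟨p, ⟨b, hbB, hbA, rfl⟩, hmax⟩ :=
    (set_has_maximal_iff_noetherian.mpr (inferInstanceAs (IsNoetherian A A))) _ hnonempty
  -- the denominator ideal is prime
  have hne_top : denIdeal A b ≠ ⊤ := by
    intro h
    have : (1 : A) ∈ denIdeal A b := h ▸ Submodule.mem_top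
    obtain ⟨c, hc⟩ := this
    exact hbA ⟨c, by rw [← hc, map_one, one_mul]⟩
  have hprime : (denIdeal A b).IsPrime := by
    refine ⟨hne_top, ?_⟩
    intro r s hrs
    by_cases hs : s ∈ denIdeal A b
    · exact Or.inr hs
    · left
      set b' := φ s * b with hb'
      have hb'B : b' ∈ B := B.mul_mem (B.algebraMap_mem s) hbB
      have hb'A : ¬∃ a, φ a = b' := by
        rintro ⟨a, ha⟩
        exact hs ⟨a, ha.symm⟩
      have hle : denIdeal A b ≤ denIdeal A b' := by
        rintro a ⟨c, hc⟩
        refine ⟨s * c, ?_⟩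
        rw [hb', map_mul]
        calc φ a * (φ s * b) = φ s * (φ a * b) := by ring
        _ = φ s * φ c := by rw [hc]
      have heq : denIdeal A b' = denIdeal A b :=
        ((hle.lt_or_eq).resolve_left (hmax (denIdeal A b') ⟨b', hb'B, hb'A, rfl⟩)).symm
      rw [← heq]
      obtain ⟨c, hc⟩ := hrs
      refine ⟨c, ?_⟩
      rw [hb']
      calc φ r * (φ s * b) = φ (r * s) * b := by rw [map_mul]; ring
      _ = φ c := hc
  by_cases hchain : ∃ q₁ q₂ : Ideal A, q₁.IsPrime ∧ q₂.IsPrime ∧ q₁ < q₂ ∧ q₂ < denIdeal A b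
  · -- height ≥ 2 : use the Ext vanishing
    obtain ⟨q₁, q₂, hq₁, hq₂, h12, h2p⟩ := hchain
    have hsub := hExt _ hprime ⟨q₁, q₂, hq₁, hq₂, h12, h2p⟩
    -- the linear map `p →ₗ[A] A` given by multiplication by `b`
    have hex : ∀ x : denIdeal A b, ∃ c, φ x * b = φ c := fun x => x.2
    let g : ↥(denIdeal A b) → A := fun x => (hex x).choose
    have hg : ∀ x, φ (g x) = φ (x : A) * b := fun x => ((hex x).choose_spec).symm
    let f : (denIdeal A b : Ideal A) →ₗ[A] A :=
      { toFun := g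
        map_add' := by
          intro x y
          apply hinj
          rw [hg, map_add, hg, hg, Submodule.coe_add, map_add, add_mul]
        map_smul' := by
          intro r x
          apply hinj
          simp only [RingHom.id_apply]
          rw [hg, smul_eq_mul, map_mul, hg, SetLike.val_smul, smul_eq_mul, map_mul, mul_assoc] }
    obtain ⟨s, c, hs1, hsc⟩ := ext_vanishing_key (denIdeal A b) hsub f
    have hs : s ∉ denIdeal A b := by
      intro hsmem
      have h1 : (1 : A) ∈ denIdeal A b := by
        have := (denIdeal A b).sub_mem hsmem hs1
        simpa using this
      exact hne_top ((Ideal.eq_top_iff_one _).mpr h1)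
    -- pick a nonzero element of `p`
    have hpbot : denIdeal A b ≠ ⊥ := by
      intro h
      rw [h] at h2p
      exact (not_lt_bot h2p)
    obtain ⟨x₀, hx₀p, hx₀⟩ := Submodule.exists_mem_ne_zero_of_ne_bot hpbot
    have hkey := hsc ⟨x₀, hx₀p⟩
    have hfx : φ x₀ * b = φ (f ⟨x₀, hx₀p⟩) := (hex ⟨x₀, hx₀p⟩).choose_spec
    -- conclude `s ∈ denIdeal A b`, contradiction
    apply hs
    refine ⟨c, ?_⟩
    have : (φ s * b - φ c) * φ x₀ = 0 := by
      have h1 : φ s * (φ x₀ * b) = φ (s * f ⟨x₀, hx₀p⟩) := by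
        rw [hfx, ← map_mul]
      rw [hkey] at h1
      rw [map_mul] at h1
      calc (φ s * b - φ c) * φ x₀ = φ s * (φ x₀ * b) - φ c * φ x₀ := by ring
      _ = 0 := by rw [h1]; ring
    have hx0ne : φ x₀ ≠ 0 := fun h => hx₀ (hinj (by rw [h, map_zero]))
    have := mul_eq_zero.mp this
    rcases this with h | h
    · exact sub_eq_zero.mp h
    · exact absurd h hx0ne
  · -- height ≤ 1 : use the localization hypothesis
    obtain ⟨a, s, hs, heq⟩ := hloc _ hprime hchain b hbB
    exact hs ⟨a, by rw [mul_comm]; exact heq⟩
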